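/- For every natural number m ≥ 2 and every real a ≥ 1, with b = 2^m (as a real number): (a/2)·((m+1)·b² − b) ≥ (a·m/4) · (1/2)·(2b² + m·b − b). -/

import Mathlib

/-- In the refined construction the optimal volume is at least `a·m/4` times
the greedy volume bound. -/
theorem refined_ratio (m : ℕ) (hm : 2 ≤ m) (a : ℝ) (ha : 1 ≤ a)
    (b : ℝ) (hb : b = 2^m) :
    (a/2) * (((m:ℝ)+1) * b^2 - b) ≥ (a * (m:ℝ)/4) * ((1/2) * (2*b^2 + (m:ℝ)*b - b)) := by
  have hmb : (m:ℝ) + 1 ≤ b := by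
    rw [hb]
    exact_mod_cast Nat.lt_two_pow_self (n := m)
  have hm2 : (2:ℝ) ≤ (m:ℝ) := by exact_mod_cast hm
  have hb0 : (0:ℝ) < b := by rw [hb]; positivity
  have key : 0 ≤ b * ((2*(m:ℝ)+4)*b - (m:ℝ)^2 + (m:ℝ) - 4) := by
    nlinarith [mul_le_mul_of_nonneg_left hmb hb0.le]
  nlinarith [mul_nonneg (by linarith : (0:ℝ) ≤ a - 1) key, key]
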